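/- If L is regular and recognized by some acyclic DFA (i.e., L is ℛ-trivial), then for any word w ∈ A* and subalphabet C ⊆ A, the language L ↑_C w is also recognized by an acyclic DFA (ℛ-trivial). -/

import Mathlib

open List

variable {A : Type*}

/-- Extract the subword of `x` at positions `K`. -/
def extractW (x : List A) (K : Finset (Fin x.length)) : List A :=
  ((List.finRange x.length).filter (fun i => i ∈ K)).map x.get

/-- `InterpW C u v x` : `x` is a shuffle of `u` and `v` with possible sharing of letters in `C`. -/
def InterpW (C : Set A) (u v x : List A) : Prop :=
  ∃ K K' : Finset (Fin x.length), K ∪ K' = Finset.univ ∧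
    extractW x K = u ∧ extractW x K' = v ∧ ∀ a ∈ extractW x (K ∩ K'), a ∈ C

/-- Interpolation product of languages. -/
def interpL (C : Set A) (L L' : Set (List A)) : Set (List A) :=
  {x | ∃ u ∈ L, ∃ v ∈ L', InterpW C u v x}

/-- Shuffle product of languages. -/
def shuffleL (L L' : Set (List A)) : Set (List A) := interpL ∅ L L'

/-- Simon's congruence: same scattered subwords of length at most `k`. -/
def SimK (k : ℕ) (u v : List A) : Prop :=
  ∀ w : List A, w.length ≤ k → (w.Sublist u ↔ w.Sublist v)

/-- Piecewise-testability: union of `∼ₖ`-classes for some `k`. -/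
def PT (L : Set (List A)) : Prop :=
  ∃ k, ∀ u v : List A, SimK k u v → (u ∈ L ↔ v ∈ L)

/-- A DFA is acyclic when every cycle is a self-loop. -/
def DFA.Acyclic {σ : Type*} (M : DFA A σ) : Prop :=
  ∀ p q (u v : List A), M.evalFrom p u = q → M.evalFrom q v = p → p = q

/-- A language is ℛ-trivial iff it is recognized by a finite acyclic DFA. -/
def RTrivial (L : Set (List A)) : Prop :=
  ∃ (σ : Type) (_ : Fintype σ) (M : DFA A σ), M.Acyclic ∧ ∀ x, x ∈ M.accepts ↔ x ∈ L

inductive Sh (C : Set A) : List A → List A → List A → Prop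
  | nil : Sh C [] [] []
  | left {u v x} (a) : Sh C u v x → Sh C (a::u) v (a::x)
  | right {u v x} (a) : Sh C u v x → Sh C u (a::v) (a::x)
  | both {u v x} {a} : a ∈ C → Sh C u v x → Sh C (a::u) (a::v) (a::x)

lemma extractW_cons (a : A) (x : List A) (K : Finset (Fin (x.length + 1))) :
    extractW (a :: x) K =
      (if (0 : Fin (x.length + 1)) ∈ K then [a] else []) ++
        extractW x (K.preimage Fin.succ ((Fin.succ_injective _).injOn)) := by
  unfold extractW
  show ((finRange (x.length+1)).filter (fun i => i ∈ K)).map (a :: x).get = _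
  rw [List.finRange_succ, List.filter_cons]
  have hfm : (filter (fun i => decide (i ∈ K)) (map Fin.succ (finRange x.length))) =
      map Fin.succ (filter ((fun i => decide (i ∈ K)) ∘ Fin.succ) (finRange x.length)) :=
    List.filter_map
  by_cases h0 : (0 : Fin (x.length+1)) ∈ K <;>
    simp [h0, hfm, List.map_map, Function.comp_def, Finset.mem_preimage]

lemma preimage_succ_inter {m : ℕ} (K K' : Finset (Fin (m+1))) :
    (K ∩ K').preimage Fin.succ ((Fin.succ_injective _).injOn) =
      K.preimage Fin.succ ((Fin.succ_injective _).injOn) ∩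
      K'.preimage Fin.succ ((Fin.succ_injective _).injOn) := by
  ext i; simp [Finset.mem_preimage]

lemma preimage_succ_image {m : ℕ} (K : Finset (Fin m)) :
    (K.image Fin.succ).preimage Fin.succ ((Fin.succ_injective _).injOn) = K := by
  ext i; simp [Finset.mem_preimage, (Fin.succ_injective m).eq_iff]

lemma preimage_succ_insert_zero {m : ℕ} (K : Finset (Fin (m+1))) :
    (insert 0 K).preimage Fin.succ ((Fin.succ_injective _).injOn) =
      K.preimage Fin.succ ((Fin.succ_injective _).injOn) := by
  ext i; simp [Finset.mem_preimage, Fin.succ_ne_zero]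

lemma zero_not_mem_image_succ {m : ℕ} (K : Finset (Fin m)) :
    (0 : Fin (m+1)) ∉ K.image Fin.succ := by
  simp only [Finset.mem_image, not_exists]
  intro i
  rintro ⟨-, h⟩
  exact (Fin.succ_ne_zero i) h

lemma cover_lift {m : ℕ} {K K' : Finset (Fin m)} (h : K ∪ K' = Finset.univ)
    {L L' : Finset (Fin (m+1))}
    (hL : K.image Fin.succ ⊆ L) (hL' : K'.image Fin.succ ⊆ L')
    (h0 : (0 : Fin (m+1)) ∈ L ∨ (0 : Fin (m+1)) ∈ L') : L ∪ L' = Finset.univ := by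
  ext j
  simp only [Finset.mem_univ, iff_true, Finset.mem_union]
  induction j using Fin.cases with
  | zero => exact h0
  | succ i =>
    have : i ∈ K ∪ K' := h ▸ Finset.mem_univ i
    rcases Finset.mem_union.mp this with hi | hi
    · exact Or.inl (hL (Finset.mem_image_of_mem _ hi))
    · exact Or.inr (hL' (Finset.mem_image_of_mem _ hi))

lemma interpW_iff_sh (C : Set A) (u v x : List A) : InterpW C u v x ↔ Sh C u v x := by
  constructor
  · intro h
    induction x generalizing u v with
    | nil =>
      obtain ⟨K, K', -, hu, hv, -⟩ := h
      simp only [extractW, finRange] at hu hv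
      simp only [List.length_nil] at *
      cases hu; cases hv
      exact Sh.nil
    | cons a x ih =>
      obtain ⟨K, K', hcov, hu, hv, hC⟩ := h
      rw [extractW_cons] at hu hv
      have hC' : ∀ b ∈ extractW x (K.preimage Fin.succ ((Fin.succ_injective _).injOn) ∩
          K'.preimage Fin.succ ((Fin.succ_injective _).injOn)), b ∈ C := by
        intro b hb
        apply hC
        rw [extractW_cons, preimage_succ_inter]
        exact List.mem_append_right _ hb
      have h0 : (0 : Fin (x.length+1)) ∈ K ∨ (0 : Fin (x.length+1)) ∈ K' :=
        Finset.mem_union.mp (hcov ▸ Finset.mem_univ _)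
      have hcov₀ : K.preimage Fin.succ ((Fin.succ_injective _).injOn) ∪
          K'.preimage Fin.succ ((Fin.succ_injective _).injOn) = Finset.univ := by
        ext i
        have : i.succ ∈ K ∪ K' := hcov ▸ Finset.mem_univ _
        simp only [Finset.mem_union, Finset.mem_preimage, Finset.mem_univ, iff_true]
        exact Finset.mem_union.mp this
      by_cases hK : (0 : Fin (x.length+1)) ∈ K <;> by_cases hK' : (0 : Fin (x.length+1)) ∈ K'
      · have ha : a ∈ C := by
          apply hC a
          rw [extractW_cons]
          rw [if_pos (Finset.mem_inter.mpr ⟨hK, hK'⟩)]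
          exact List.mem_cons_self
        rw [if_pos hK] at hu; rw [if_pos hK'] at hv
        rw [← hu, ← hv]
        exact Sh.both ha (ih _ _ ⟨_, _, hcov₀, rfl, rfl, hC'⟩)
      · rw [if_pos hK] at hu; rw [if_neg hK', List.nil_append] at hv
        rw [← hu, ← hv]
        exact Sh.left a (ih _ _ ⟨_, _, hcov₀, rfl, rfl, hC'⟩)
      · rw [if_neg hK, List.nil_append] at hu; rw [if_pos hK'] at hv
        rw [← hu, ← hv]
        exact Sh.right a (ih _ _ ⟨_, _, hcov₀, rfl, rfl, hC'⟩)
      · exfalso; rcases h0 with h | h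
        · exact hK h
        · exact hK' h
  · intro h
    induction h with
    | nil =>
      refine ⟨Finset.univ, Finset.univ, by simp, ?_, ?_, ?_⟩ <;> simp [extractW, finRange]
    | @left u v x a hsh ih =>
      obtain ⟨K₀, K₀', hcov, hu, hv, hC⟩ := ih
      refine ⟨(insert (0 : Fin (x.length+1)) (K₀.image Fin.succ) : Finset (Fin (x.length+1))),
        (K₀'.image Fin.succ : Finset (Fin (x.length+1))), ?_, ?_, ?_, ?_⟩
      · exact cover_lift hcov (Finset.subset_insert _ _) (le_refl _) (Or.inl (Finset.mem_insert_self _ _))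
      · rw [extractW_cons, preimage_succ_insert_zero, preimage_succ_image,
          if_pos (Finset.mem_insert_self _ _), hu]
        rfl
      · rw [extractW_cons, if_neg (zero_not_mem_image_succ _), preimage_succ_image, hv]
        rfl
      · intro b hb
        rw [extractW_cons, preimage_succ_inter, preimage_succ_insert_zero, preimage_succ_image,
          preimage_succ_image,
          if_neg (fun hmem => zero_not_mem_image_succ _ (Finset.mem_inter.mp hmem).2)] at hb
        exact hC b (by simpa using hb)
    | @right u v x a hsh ih =>
      obtain ⟨K₀, K₀', hcov, hu, hv, hC⟩ := ih
      refine ⟨(K₀.image Fin.succ : Finset (Fin (x.length+1))),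
        (insert (0 : Fin (x.length+1)) (K₀'.image Fin.succ) : Finset (Fin (x.length+1))), ?_, ?_, ?_, ?_⟩
      · exact cover_lift hcov (le_refl _) (Finset.subset_insert _ _) (Or.inr (Finset.mem_insert_self _ _))
      · rw [extractW_cons, if_neg (zero_not_mem_image_succ _), preimage_succ_image, hu]
        rfl
      · rw [extractW_cons, preimage_succ_insert_zero, preimage_succ_image,
          if_pos (Finset.mem_insert_self _ _), hv]
        rfl
      · intro b hb
        rw [extractW_cons, preimage_succ_inter, preimage_succ_insert_zero, preimage_succ_image,
          preimage_succ_image,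
          if_neg (fun hmem => zero_not_mem_image_succ _ (Finset.mem_inter.mp hmem).1)] at hb
        exact hC b (by simpa using hb)
    | @both u v x a ha hsh ih =>
      obtain ⟨K₀, K₀', hcov, hu, hv, hC⟩ := ih
      refine ⟨(insert (0 : Fin (x.length+1)) (K₀.image Fin.succ) : Finset (Fin (x.length+1))),
        (insert (0 : Fin (x.length+1)) (K₀'.image Fin.succ) : Finset (Fin (x.length+1))), ?_, ?_, ?_, ?_⟩
      · exact cover_lift hcov (Finset.subset_insert _ _) (Finset.subset_insert _ _)
          (Or.inl (Finset.mem_insert_self _ _))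
      · rw [extractW_cons, preimage_succ_insert_zero, preimage_succ_image,
          if_pos (Finset.mem_insert_self _ _), hu]
        rfl
      · rw [extractW_cons, preimage_succ_insert_zero, preimage_succ_image,
          if_pos (Finset.mem_insert_self _ _), hv]
        rfl
      · intro b hb
        rw [extractW_cons, preimage_succ_inter, preimage_succ_insert_zero, preimage_succ_insert_zero,
          preimage_succ_image, preimage_succ_image,
          if_pos (Finset.mem_inter.mpr ⟨Finset.mem_insert_self _ _, Finset.mem_insert_self _ _⟩)] at hb
        simp only [List.singleton_append, List.mem_cons] at hb
        rcases hb with rfl | hb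
        · exact ha
        · exact hC b hb

section SDFA

variable {σ : Type*}

def nstep (M : DFA A σ) (w : List A) (C : Set A) :
    σ × Fin (w.length + 1) → A → Set (σ × Fin (w.length + 1)) := fun q a =>
  {r | r = (M.step q.1 a, q.2) ∨
    ∃ h : (q.2 : ℕ) < w.length, w.get ⟨q.2, h⟩ = a ∧
      (r = (q.1, ⟨(q.2 : ℕ) + 1, by omega⟩) ∨
       (a ∈ C ∧ r = (M.step q.1 a, ⟨(q.2 : ℕ) + 1, by omega⟩)))}

def sDFA (M : DFA A σ) (w : List A) (C : Set A) : DFA A (Set (σ × Fin (w.length + 1))) where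
  step S a := {r | ∃ q ∈ S, r ∈ nstep M w C q a}
  start := {(M.start, 0)}
  accept := {S | ∃ p, (p, Fin.last w.length) ∈ S ∧ p ∈ M.accept}

lemma wseg_self (w : List A) (i : ℕ) : (w.take i).drop i = [] :=
  List.drop_eq_nil_of_le (by rw [List.length_take]; exact min_le_left _ _)

lemma wseg_cons (w : List A) (j i : ℕ) (hj : j < i) (hi : i ≤ w.length) :
    (w.take i).drop j = w[j]'(by omega) :: (w.take i).drop (j+1) := by
  rw [List.drop_eq_getElem_cons (by rw [List.length_take]; omega)]
  congr 1
  exact List.getElem_take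



lemma sh_cons_inv {C : Set A} {u v x : List A} {a : A} (h : Sh C u v (a::x)) :
    (∃ u', u = a :: u' ∧ Sh C u' v x) ∨ (∃ v', v = a :: v' ∧ Sh C u v' x) ∨
    (a ∈ C ∧ ∃ u' v', u = a :: u' ∧ v = a :: v' ∧ Sh C u' v' x) := by
  cases h with
  | left _ h => exact Or.inl ⟨_, rfl, h⟩
  | right _ h => exact Or.inr (Or.inl ⟨_, rfl, h⟩)
  | both hC h => exact Or.inr (Or.inr ⟨hC, _, _, rfl, rfl, h⟩)

lemma sh_nil_inv {C : Set A} {u v : List A} (h : Sh C u v []) : u = [] ∧ v = [] := by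
  cases h; exact ⟨rfl, rfl⟩

lemma sDFA_evalFrom {σ : Type*} (M : DFA A σ) (w : List A) (C : Set A) (x : List A) :
    ∀ (S : Set (σ × Fin (w.length+1))) (p : σ) (i : Fin (w.length+1)),
    ((p, i) ∈ (sDFA M w C).evalFrom S x ↔
      ∃ (q : σ) (j : Fin (w.length+1)) (u v : List A), (q, j) ∈ S ∧ Sh C u v x ∧
        M.evalFrom q u = p ∧ (i : ℕ) = (j : ℕ) + v.length ∧ (w.take i).drop j = v) := by
  induction x with
  | nil =>
    intro S p i
    constructor
    · intro hmem
      exact ⟨p, i, [], [], hmem, Sh.nil, rfl, by simp, wseg_self w i⟩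
    · rintro ⟨q, j, u, v, hqS, hsh, hev, hlen, hseg⟩
      obtain ⟨rfl, rfl⟩ := sh_nil_inv hsh
      have : i = j := Fin.ext (by simpa using hlen)
      subst this
      rw [← hev]
      exact hqS
  | cons a x ih =>
    intro S p i
    show (p, i) ∈ (sDFA M w C).evalFrom ((sDFA M w C).step S a) x ↔ _
    rw [ih]
    constructor
    · rintro ⟨q', j', u', v', hmem, hsh, hev, hlen, hseg⟩
      obtain ⟨⟨q, j⟩, hqS, hn⟩ := hmem
      have hin : (i : ℕ) ≤ w.length := by have := i.isLt; omega
      rcases hn with heq | ⟨h, hget, heq2⟩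
      · rw [Prod.mk.injEq] at heq
        obtain ⟨hq, hj⟩ := heq
        rw [hq] at hev; rw [hj] at hlen hseg
        exact ⟨q, j, a :: u', v', hqS, Sh.left a hsh, hev, hlen, hseg⟩
      · rcases heq2 with heq | ⟨haC, heq⟩
        · rw [Prod.mk.injEq] at heq
          obtain ⟨hq, hj⟩ := heq
          rw [hq] at hev
          have hj1 : (j' : ℕ) = (j : ℕ) + 1 := by rw [hj]
          rw [hj1] at hlen hseg
          have hji : (j : ℕ) < (i : ℕ) := by omega
          refine ⟨q, j, u', a :: v', hqS, Sh.right a hsh, hev,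
            by simp only [List.length_cons]; omega, ?_⟩
          rw [wseg_cons w j i hji hin]
          exact List.cons_eq_cons.mpr ⟨by simpa [List.get_eq_getElem] using hget, hseg⟩
        · rw [Prod.mk.injEq] at heq
          obtain ⟨hq, hj⟩ := heq
          rw [hq] at hev
          have hj1 : (j' : ℕ) = (j : ℕ) + 1 := by rw [hj]
          rw [hj1] at hlen hseg
          have hji : (j : ℕ) < (i : ℕ) := by omega
          refine ⟨q, j, a :: u', a :: v', hqS, Sh.both haC hsh, hev,
            by simp only [List.length_cons]; omega, ?_⟩
          rw [wseg_cons w j i hji hin]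
          exact List.cons_eq_cons.mpr ⟨by simpa [List.get_eq_getElem] using hget, hseg⟩
    · rintro ⟨q, j, u, v, hqS, hsh, hev, hlen, hseg⟩
      have hin : (i : ℕ) ≤ w.length := by have := i.isLt; omega
      rcases sh_cons_inv hsh with ⟨u', rfl, hsh0⟩ | ⟨v', rfl, hsh0⟩ | ⟨haC, u', v', rfl, rfl, hsh0⟩
      · exact ⟨M.step q a, j, u', v, ⟨(q, j), hqS, Or.inl rfl⟩, hsh0, hev, hlen, hseg⟩
      · have hji : (j : ℕ) < (i : ℕ) := by simp only [List.length_cons] at hlen; omega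
        have hjn : (j : ℕ) < w.length := by omega
        rw [wseg_cons w j i hji hin] at hseg
        obtain ⟨hga, hrest⟩ := List.cons_eq_cons.mp hseg
        refine ⟨q, ⟨(j : ℕ) + 1, by omega⟩, u, v',
          ⟨(q, j), hqS, Or.inr ⟨hjn, by simpa [List.get_eq_getElem] using hga, Or.inl rfl⟩⟩,
          hsh0, hev, ?_, hrest⟩
        show (i : ℕ) = (j : ℕ) + 1 + v'.length
        simp only [List.length_cons] at hlen; omega
      · have hji : (j : ℕ) < (i : ℕ) := by simp only [List.length_cons] at hlen; omega
        have hjn : (j : ℕ) < w.length := by omega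
        rw [wseg_cons w j i hji hin] at hseg
        obtain ⟨hga, hrest⟩ := List.cons_eq_cons.mp hseg
        refine ⟨M.step q a, ⟨(j : ℕ) + 1, by omega⟩, u', v',
          ⟨(q, j), hqS, Or.inr ⟨hjn, by simpa [List.get_eq_getElem] using hga, Or.inr ⟨haC, rfl⟩⟩⟩,
          hsh0, hev, ?_, hrest⟩
        show (i : ℕ) = (j : ℕ) + 1 + v'.length
        simp only [List.length_cons] at hlen; omega

lemma sDFA_accepts {σ : Type*} (M : DFA A σ) (w : List A) (C : Set A) (x : List A) :
    x ∈ (sDFA M w C).accepts ↔ ∃ u, Sh C u w x ∧ u ∈ M.accepts := by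
  rw [DFA.mem_accepts]
  show (∃ p, (p, Fin.last w.length) ∈ (sDFA M w C).evalFrom {(M.start, 0)} x ∧ p ∈ M.accept) ↔ _
  constructor
  · rintro ⟨p, hp, hacc⟩
    rw [sDFA_evalFrom] at hp
    obtain ⟨q, j, u, v, hqS, hsh, hev, hlen, hseg⟩ := hp
    rw [Set.mem_singleton_iff, Prod.mk.injEq] at hqS
    obtain ⟨hq, hj⟩ := hqS
    subst hq
    have hj0 : (j : ℕ) = 0 := by rw [hj]; rfl
    have hv : v = w := by
      rw [← hseg, hj0, List.drop_zero, Fin.val_last, List.take_length]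
    refine ⟨u, hv ▸ hsh, ?_⟩
    show M.evalFrom M.start u ∈ M.accept
    rw [hev]; exact hacc
  · rintro ⟨u, hsh, hu⟩
    refine ⟨M.evalFrom M.start u, ?_, hu⟩
    rw [sDFA_evalFrom]
    exact ⟨M.start, 0, u, w, rfl, hsh, rfl, by simp [Fin.val_last], by simp⟩

end SDFA

section Acyc
variable {σ : Type*} {M : DFA A σ}

lemma acyc_prefix_fix (hacyc : M.Acyclic) {p : σ} {z₁ z₂ : List A}
    (h : M.evalFrom p (z₁ ++ z₂) = p) : M.evalFrom p z₁ = p := by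
  have := hacyc p (M.evalFrom p z₁) z₁ z₂ rfl (by rwa [← DFA.evalFrom_of_append])
  exact this.symm

lemma step_fix_of_mem (hacyc : M.Acyclic) {p : σ} {z : List A}
    (h : M.evalFrom p z = p) {b : A} (hb : b ∈ z) : M.step p b = p := by
  obtain ⟨l₁, l₂, rfl⟩ := List.append_of_mem hb
  have h1 : M.evalFrom p l₁ = p := acyc_prefix_fix hacyc h
  have h2 : M.evalFrom p (l₁ ++ [b]) = p := by
    apply acyc_prefix_fix hacyc (z₂ := l₂)
    simpa using h
  rwa [DFA.evalFrom_append_singleton, h1] at h2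

lemma evalFrom_fix_of_forall {p : σ} {u : List A} (h : ∀ b ∈ u, M.step p b = p) :
    M.evalFrom p u = p := by
  induction u with
  | nil => rfl
  | cons b u ih =>
    show M.evalFrom (M.step p b) u = p
    rw [h b List.mem_cons_self]
    exact ih fun c hc => h c (List.mem_cons_of_mem _ hc)

lemma image_of_fixed {α : Type*} {f : α → α} {V : Set α} (h : ∀ p ∈ V, f p = p) :
    f '' V = V := by
  ext q
  constructor
  · rintro ⟨p, hp, rfl⟩
    rw [h p hp]; exact hp
  · intro hq
    exact ⟨q, hq, h q hq⟩

lemma image_eval_fix [Finite σ] (hacyc : M.Acyclic) (z : List A) (Y : Set σ)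
    (h : (fun p => M.evalFrom p z) '' Y = Y) : ∀ p ∈ Y, M.evalFrom p z = p := by
  set f := fun p => M.evalFrom p z with hf
  have hmapsto : Set.MapsTo f Y Y := fun p hp => h ▸ Set.mem_image_of_mem f hp
  have hinj : Set.InjOn f Y := by
    have hfin : Y.Finite := Set.toFinite Y
    refine ((hfin.surjOn_iff_bijOn_of_mapsTo hmapsto).mp ?_).injOn
    show Y ⊆ f '' Y
    rw [h]
  have hiter : ∀ k, Set.MapsTo (f^[k]) Y Y ∧ Set.InjOn (f^[k]) Y := by
    intro k
    induction k with
    | zero => exact ⟨fun p hp => hp, Set.injOn_id Y⟩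
    | succ k ih =>
      rw [Function.iterate_succ]
      exact ⟨ih.1.comp hmapsto, ih.2.comp hinj hmapsto⟩
  intro p hp
  have main : ∀ k₁ k₂, k₁ < k₂ → f^[k₁] p = f^[k₂] p → ∃ d, 0 < d ∧ f^[d] p = p := by
    intro k₁ k₂ hlt heq
    refine ⟨k₂ - k₁, by omega, ?_⟩
    apply (hiter k₁).2 ((hiter (k₂ - k₁)).1 hp) hp
    rw [← Function.iterate_add_apply, show k₁ + (k₂ - k₁) = k₂ by omega]
    exact heq.symm
  obtain ⟨k₁, k₂, hne, heq⟩ := Finite.exists_ne_map_eq_of_infinite (fun k : ℕ => f^[k] p)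
  have key : ∃ d, 0 < d ∧ f^[d] p = p := by
    rcases hne.lt_or_gt with hlt | hlt
    · exact main k₁ k₂ hlt heq
    · exact main k₂ k₁ hlt heq.symm
  obtain ⟨d, hd, hfix⟩ := key
  have hrep : ∀ k (q : σ), M.evalFrom q (List.flatten (List.replicate k z)) = f^[k] q := by
    intro k
    induction k with
    | zero => intro q; simp
    | succ k ih =>
      intro q
      rw [List.replicate_succ, List.flatten_cons, DFA.evalFrom_of_append,
        Function.iterate_succ_apply]
      exact ih (M.evalFrom q z)
  refine (hacyc p (f p) z (List.flatten (List.replicate (d-1) z)) rfl ?_).symm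
  rw [hrep, ← Function.iterate_succ_apply]
  rw [show (d-1).succ = d by omega]
  exact hfix

lemma get_mem' (z : List A) (t : ℕ) (ht : t < z.length) : z.get ⟨t, ht⟩ ∈ z := by
  rw [List.get_eq_getElem]
  exact List.getElem_mem ht

lemma level_cycle [Finite σ] (hacyc : M.Acyclic) (z : List A)
    (Y : ℕ → Set σ) (E : A → Set σ)
    (h1 : ∀ t (ht : t < z.length),
      Y (t+1) = (fun p => M.step p (z.get ⟨t, ht⟩)) '' Y t ∪ E (z.get ⟨t, ht⟩))
    (h2 : ∀ t (ht : t < z.length), E (z.get ⟨t, ht⟩) ⊆ {p | ∀ b ∈ z, M.step p b = p})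
    (h3 : Y z.length = Y 0) :
    (∀ t ≤ z.length, Y t = Y 0) ∧ Y 0 ⊆ {p | ∀ b ∈ z, M.step p b = p} := by
  set Fix : Set σ := {p | ∀ b ∈ z, M.step p b = p} with hFixdef
  set evz := fun p => M.evalFrom p z with hevz
  have hfixev : ∀ p ∈ Fix, evz p = p := fun p hp => evalFrom_fix_of_forall hp
  -- unrolled form
  have hclaim : ∀ t ≤ z.length, ∃ W ⊆ Fix,
      Y t = (fun p => M.evalFrom p (z.take t)) '' Y 0 ∪ W := by
    intro t
    induction t with
    | zero => intro _; refine ⟨∅, by simp, by simp [DFA.evalFrom]⟩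
    | succ t ih =>
      intro ht
      obtain ⟨W, hW, hYt⟩ := ih (by omega)
      have htz : t < z.length := by omega
      set b := z.get ⟨t, htz⟩ with hb
      have hbz : b ∈ z := by
        rw [hb, List.get_eq_getElem]
        exact List.getElem_mem htz
      have htake : z.take (t+1) = z.take t ++ [b] := by
        rw [List.take_succ, List.getElem?_eq_getElem htz]
        simp [hb, List.get_eq_getElem]
      have hcomp : (fun p => M.step ((fun p => M.evalFrom p (z.take t)) p) b)
          = fun p => M.evalFrom p (z.take (t+1)) := by
        funext p
        rw [htake, DFA.evalFrom_append_singleton]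
      have himgW : (fun p => M.step p b) '' W = W :=
        image_of_fixed fun p hp => hW hp b hbz
      refine ⟨W ∪ E b, Set.union_subset hW (h2 t htz), ?_⟩
      rw [h1 t htz, hYt, Set.image_union, Set.image_image, hcomp, himgW, Set.union_assoc]
  obtain ⟨W, hWFix, hB⟩ := hclaim z.length le_rfl
  rw [h3, List.take_length, ← hevz] at hB
  have hWY0 : W ⊆ Y 0 := by
    conv_rhs => rw [hB]
    exact Set.subset_union_right
  have hevY0 : evz '' Y 0 ⊆ Y 0 := by
    conv_rhs => rw [hB]
    exact Set.subset_union_left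
  have hWim : ∀ m, evz^[m] '' W = W :=
    fun m => image_of_fixed fun p hp => Function.iterate_fixed (hfixev p (hWFix hp)) m
  have hCm : ∀ m, Y 0 = evz^[m] '' Y 0 ∪ W := by
    intro m
    induction m with
    | zero => simpa using (Set.union_eq_self_of_subset_right hWY0).symm
    | succ m ih =>
      have : evz^[m] '' Y 0 = evz^[m+1] '' Y 0 ∪ W := by
        conv_lhs => rw [hB]
        rw [Set.image_union, hWim m, ← Set.image_comp, ← Function.iterate_succ]
      calc Y 0 = evz^[m] '' Y 0 ∪ W := ih
        _ = (evz^[m+1] '' Y 0 ∪ W) ∪ W := by rw [← this]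
        _ = evz^[m+1] '' Y 0 ∪ W := by rw [Set.union_assoc, Set.union_self]
  have hdec : ∀ m, evz^[m+1] '' Y 0 ⊆ evz^[m] '' Y 0 := by
    intro m
    rw [Function.iterate_succ, Set.image_comp]
    exact Set.image_mono hevY0
  have hanti : ∀ m k, m ≤ k → evz^[k] '' Y 0 ⊆ evz^[m] '' Y 0 := by
    intro m k hmk
    induction k with
    | zero => have : m = 0 := by omega
              subst this; exact subset_rfl
    | succ k ih =>
      rcases Nat.lt_or_ge m (k+1) with h | h
      · exact (hdec k).trans (ih (by omega))
      · have : m = k + 1 := by omega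
        subst this; exact subset_rfl
  obtain ⟨k₁, k₂, hne, heq⟩ :=
    Finite.exists_ne_map_eq_of_infinite (fun m : ℕ => evz^[m] '' Y 0)
  have hstab : ∃ m, evz '' (evz^[m] '' Y 0) = evz^[m] '' Y 0 := by
    have main : ∀ a b, a < b → evz^[a] '' Y 0 = evz^[b] '' Y 0 →
        ∃ m, evz '' (evz^[m] '' Y 0) = evz^[m] '' Y 0 := by
      intro a b hab h
      refine ⟨a, ?_⟩
      have h1' : evz^[a+1] '' Y 0 ⊆ evz^[a] '' Y 0 := hdec a
      have h2' : evz^[a] '' Y 0 ⊆ evz^[a+1] '' Y 0 := h ▸ hanti (a+1) b (by omega)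
      have heqa : evz^[a+1] '' Y 0 = evz^[a] '' Y 0 := Set.Subset.antisymm h1' h2'
      have hiter1 : evz '' (evz^[a] '' Y 0) = evz^[a+1] '' Y 0 := by
        rw [Function.iterate_succ', Set.image_comp]
      rw [hiter1, heqa]
    rcases hne.lt_or_gt with hlt | hlt
    · exact main k₁ k₂ hlt heq
    · exact main k₂ k₁ hlt heq.symm
  obtain ⟨m, hm⟩ := hstab
  have hYm : ∀ p ∈ evz^[m] '' Y 0, evz p = p := image_eval_fix hacyc z _ hm
  have hsub : evz^[m] '' Y 0 ⊆ Fix := fun p hp b hb => step_fix_of_mem hacyc (hYm p hp) hb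
  have hY0Fix : Y 0 ⊆ Fix := by
    rw [hCm m]
    exact Set.union_subset hsub hWFix
  -- monotone chain
  have hFixt : ∀ t ≤ z.length, Y t ⊆ Fix ∧ (t < z.length → Y t ⊆ Y (t+1)) := by
    intro t
    induction t with
    | zero =>
      intro _
      refine ⟨hY0Fix, fun h0 => ?_⟩
      rw [h1 0 h0, image_of_fixed fun p hp => hY0Fix hp _ (get_mem' z _ _)]
      exact Set.subset_union_left
    | succ t ih =>
      intro ht
      obtain ⟨ihFix, _⟩ := ih (by omega)
      have htz : t < z.length := by omega
      have hYFix : Y (t+1) ⊆ Fix := by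
        rw [h1 t htz]
        apply Set.union_subset _ (h2 t htz)
        rintro p ⟨q, hq, rfl⟩
        show M.step q (z.get ⟨t, htz⟩) ∈ Fix
        rw [ihFix hq _ (get_mem' z _ _)]
        exact ihFix hq
      refine ⟨hYFix, fun h0 => ?_⟩
      rw [h1 (t+1) h0, image_of_fixed fun p hp => hYFix hp _ (get_mem' z _ _)]
      exact Set.subset_union_left
  have hmono : ∀ s t, s ≤ t → t ≤ z.length → Y s ⊆ Y t := by
    intro s t hst htz
    induction t with
    | zero => have : s = 0 := by omega
              subst this; exact subset_rfl
    | succ t ih =>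
      rcases Nat.lt_or_ge s (t+1) with h | h
      · exact (ih (by omega) (by omega)).trans ((hFixt t (by omega)).2 (by omega))
      · have : s = t + 1 := by omega
        subst this; exact subset_rfl
  refine ⟨fun t ht => Set.Subset.antisymm ?_ (hmono 0 t (by omega) ht), hY0Fix⟩
  exact (hmono t z.length ht le_rfl).trans (h3 ▸ subset_rfl)

end Acyc

section Main
variable {σ : Type*}

lemma step_level_zero (M : DFA A σ) (w : List A) (C : Set A)
    (S' : Set (σ × Fin (w.length+1))) (b : A) (hk : 0 < w.length + 1) (p : σ) :
    ((p, (⟨0, hk⟩ : Fin (w.length+1))) ∈ (sDFA M w C).step S' b) ↔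
      ∃ q, (q, (⟨0, hk⟩ : Fin (w.length+1))) ∈ S' ∧ M.step q b = p := by
  constructor
  · rintro ⟨⟨q, j⟩, hq, hn⟩
    rcases hn with heq | ⟨h, hget, hor⟩
    · rw [Prod.mk.injEq] at heq
      obtain ⟨hp, hj⟩ := heq
      exact ⟨q, by rw [hj]; exact hq, hp.symm⟩
    · exfalso
      rcases hor with heq | ⟨-, heq⟩ <;>
      · rw [Prod.mk.injEq] at heq
        have := congrArg Fin.val heq.2
        simp at this
  · rintro ⟨q, hq, rfl⟩
    exact ⟨(q, ⟨0, hk⟩), hq, Or.inl rfl⟩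

lemma step_level_succ (M : DFA A σ) (w : List A) (C : Set A)
    (S' : Set (σ × Fin (w.length+1))) (b : A) (k : ℕ) (hk : k + 1 < w.length + 1) (p : σ) :
    ((p, (⟨k+1, hk⟩ : Fin (w.length+1))) ∈ (sDFA M w C).step S' b) ↔
      (∃ q, (q, (⟨k+1, hk⟩ : Fin (w.length+1))) ∈ S' ∧ M.step q b = p) ∨
      (∃ hk' : k < w.length, w.get ⟨k, hk'⟩ = b ∧
        ((p, (⟨k, by omega⟩ : Fin (w.length+1))) ∈ S' ∨
         (b ∈ C ∧ ∃ q, (q, (⟨k, by omega⟩ : Fin (w.length+1))) ∈ S' ∧ M.step q b = p))) := by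
  constructor
  · rintro ⟨⟨q, j⟩, hq, hn⟩
    rcases hn with heq | ⟨h, hget, hor⟩
    · rw [Prod.mk.injEq] at heq
      obtain ⟨hp, hj⟩ := heq
      exact Or.inl ⟨q, by rw [hj]; exact hq, hp.symm⟩
    · have hjk : (j : ℕ) = k := by
        rcases hor with heq | ⟨-, heq⟩ <;>
        · rw [Prod.mk.injEq] at heq
          have := congrArg Fin.val heq.2
          simp at this
          omega
      have hkw : k < w.length := by omega
      have hje : (⟨k, hkw⟩ : Fin w.length) = ⟨(j : ℕ), h⟩ := Fin.mk_eq_mk.mpr hjk.symm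
      have hgete : w.get ⟨k, hkw⟩ = b := by rw [hje]; exact hget
      have hjfin : j = (⟨k, by omega⟩ : Fin (w.length+1)) := Fin.ext hjk
      rcases hor with heq | ⟨hbC, heq⟩
      · rw [Prod.mk.injEq] at heq
        obtain ⟨hp, -⟩ := heq
        refine Or.inr ⟨hkw, hgete, Or.inl ?_⟩
        rw [hp, ← hjfin]
        exact hq
      · rw [Prod.mk.injEq] at heq
        obtain ⟨hp, -⟩ := heq
        refine Or.inr ⟨hkw, hgete, Or.inr ⟨hbC, q, ?_, hp.symm⟩⟩
        rw [← hjfin]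
        exact hq
  · rintro (⟨q, hq, rfl⟩ | ⟨hk', hget, hcase⟩)
    · exact ⟨(q, ⟨k+1, hk⟩), hq, Or.inl rfl⟩
    · rcases hcase with hmem | ⟨hbC, q, hmem, rfl⟩
      · exact ⟨(p, ⟨k, by omega⟩), hmem, Or.inr ⟨hk', hget, Or.inl rfl⟩⟩
      · exact ⟨(q, ⟨k, by omega⟩), hmem, Or.inr ⟨hk', hget, Or.inr ⟨hbC, rfl⟩⟩⟩

lemma sDFA_acyclic [Finite σ] (M : DFA A σ) (hacyc : M.Acyclic)
    (w : List A) (C : Set A) : (sDFA M w C).Acyclic := by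
  intro S T z₁ z₂ h1 h2
  have hcyc : (sDFA M w C).evalFrom S (z₁ ++ z₂) = S := by
    rw [DFA.evalFrom_of_append, h1, h2]
  set z := z₁ ++ z₂ with hz
  set Lv : Fin (w.length+1) → ℕ → Set σ :=
    fun i t => {p | (p, i) ∈ (sDFA M w C).evalFrom S (z.take t)} with hLv
  have hstep : ∀ t (ht : t < z.length),
      (sDFA M w C).evalFrom S (z.take (t+1)) =
        (sDFA M w C).step ((sDFA M w C).evalFrom S (z.take t)) (z.get ⟨t, ht⟩) := by
    intro t ht
    rw [List.take_succ, List.getElem?_eq_getElem ht,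
      show (some z[t]).toList = [z.get ⟨t, ht⟩] by simp [List.get_eq_getElem],
      DFA.evalFrom_of_append, DFA.evalFrom_singleton]
  have hlevel : ∀ (k : ℕ) (hk : k < w.length + 1),
      (∀ t ≤ z.length, Lv ⟨k, hk⟩ t = Lv ⟨k, hk⟩ 0) ∧
        Lv ⟨k, hk⟩ 0 ⊆ {p | ∀ b ∈ z, M.step p b = p} := by
    intro k
    induction k with
    | zero =>
      intro hk
      apply level_cycle hacyc z (Lv ⟨0, hk⟩) (fun _ => (∅ : Set σ))
      · intro t ht
        ext p
        show (p, (⟨0, hk⟩ : Fin (w.length+1))) ∈ (sDFA M w C).evalFrom S (z.take (t+1)) ↔ _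
        rw [hstep t ht, step_level_zero]
        simp only [Set.union_empty, Set.mem_image]
        constructor
        · rintro ⟨q, hq, rfl⟩
          exact ⟨q, hq, rfl⟩
        · rintro ⟨q, hq, rfl⟩
          exact ⟨q, hq, rfl⟩
      · intro t ht
        exact Set.empty_subset _
      · show Lv _ z.length = Lv _ 0
        simp only [hLv, List.take_length, List.take_zero, hcyc]
        rfl
    | succ k ih =>
      intro hk
      have hkk : k < w.length + 1 := by omega
      obtain ⟨ihc, ihf⟩ := ih hkk
      apply level_cycle hacyc z (Lv ⟨k+1, hk⟩)
        (fun b => {p | ∃ hk' : k < w.length, w.get ⟨k, hk'⟩ = b ∧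
          (p ∈ Lv ⟨k, hkk⟩ 0 ∨ (b ∈ C ∧ ∃ q, q ∈ Lv ⟨k, hkk⟩ 0 ∧ M.step q b = p))})
      · intro t ht
        have hLt : ∀ (p : σ),
            ((p, (⟨k, by omega⟩ : Fin (w.length+1))) ∈ (sDFA M w C).evalFrom S (z.take t)
              ↔ p ∈ Lv ⟨k, hkk⟩ 0) := by
          intro p
          rw [← ihc t (by omega)]
          exact Iff.rfl
        ext p
        show (p, (⟨k+1, hk⟩ : Fin (w.length+1))) ∈ (sDFA M w C).evalFrom S (z.take (t+1)) ↔ _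
        rw [hstep t ht, step_level_succ]
        simp only [Set.mem_union, Set.mem_image, Set.mem_setOf_eq]
        constructor
        · rintro (⟨q, hq, rfl⟩ | ⟨hk', hget, hcase⟩)
          · exact Or.inl ⟨q, hq, rfl⟩
          · refine Or.inr ⟨hk', hget, ?_⟩
            rcases hcase with hmem | ⟨hbC, q, hmem, rfl⟩
            · exact Or.inl ((hLt p).mp hmem)
            · exact Or.inr ⟨hbC, q, (hLt q).mp hmem, rfl⟩
        · rintro (⟨q, hq, rfl⟩ | ⟨hk', hget, hcase⟩)
          · exact Or.inl ⟨q, hq, rfl⟩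
          · refine Or.inr ⟨hk', hget, ?_⟩
            rcases hcase with hmem | ⟨hbC, q, hmem, rfl⟩
            · exact Or.inl ((hLt p).mpr hmem)
            · exact Or.inr ⟨hbC, q, (hLt q).mpr hmem, rfl⟩
      · rintro t ht p ⟨hk', hget, hcase⟩
        rcases hcase with hmem | ⟨hbC, q, hmem, rfl⟩
        · exact ihf hmem
        · have hqc : M.step q (z.get ⟨t, ht⟩) = q := ihf hmem _ (get_mem' z t ht)
          rw [hqc]
          exact ihf hmem
      · show Lv _ z.length = Lv _ 0
        simp only [hLv, List.take_length, List.take_zero, hcyc]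
        rfl
  have hall : ∀ t ≤ z.length, (sDFA M w C).evalFrom S (z.take t) = S := by
    intro t ht
    ext ⟨p, i⟩
    have hi := (hlevel i.1 i.isLt).1 t ht
    constructor
    · intro hm
      have hm' : p ∈ Lv ⟨i.1, i.isLt⟩ t := hm
      rw [hi] at hm'
      exact hm'
    · intro hm
      have hm' : p ∈ Lv ⟨i.1, i.isLt⟩ 0 := hm
      rw [← hi] at hm'
      exact hm'
  have hfin := hall z₁.length (by rw [hz]; simp)
  rw [hz, List.take_left] at hfin
  rw [← h1, hfin]

end Main

theorem stmt12 {A : Type*} (L : Set (List A)) (hL : RTrivial L)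
    (w : List A) (C : Set A) : RTrivial (interpL C L {w}) := by
  obtain ⟨σ, instσ, M, hacyc, hacc⟩ := hL
  letI := instσ
  refine ⟨Set (σ × Fin (w.length + 1)), Fintype.ofFinite _, sDFA M w C,
    sDFA_acyclic M hacyc w C, ?_⟩
  intro x
  rw [sDFA_accepts]
  constructor
  · rintro ⟨u, hsh, hu⟩
    exact ⟨u, (hacc u).mp hu, w, rfl, (interpW_iff_sh C u w x).mpr hsh⟩
  · rintro ⟨u, huL, v, hv, hint⟩
    rw [Set.mem_singleton_iff] at hv
    subst hv
    exact ⟨u, (interpW_iff_sh C u v x).mp hint, (hacc u).mpr huL⟩
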